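/- Let T ≥ 1, let β_1,…,β_T be positive reals, and let C' > 0. Define the geometric mean G = (Π_{t=1}^T β_t)^{1/T} and ν = (G/4)·exp(−C'/(2T)), and assume β_t ≥ 4ν for every t. Set u_t* = 2·log(β_t/(4ν)). Then u_t* ≥ 0 for all t, Σ_{t=1}^T u_t* = C', and u* minimizes the function u ↦ Σ_{t=1}^T (β_t/2)·exp(−u_t/2) over the set {u ∈ ℝ^T : u_t ≥ 0 for all t, Σ_{t=1}^T u_t ≤ C'}, with minimum value Σ_{t=1}^T (β_t/2)·exp(−u_t*/2) = 2Tν = (T/2)·exp(−C'/(2T))·(Π_{t=1}^T β_t)^{1/T}. -/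

import Mathlib

open Finset

/-- Corollary 3 (optimized Chernoff-bound proxy with geometric mean): with
positive importance metrics `β t`, SNR budget `C' > 0`, geometric mean
`G = (∏ t, β t)^{1/T}`, dual variable `ν = (G/4) exp(-C'/(2T))`, and
(assuming `β t ≥ 4ν` for all `t`) allocations `u* t = 2 log(β t/(4ν))`, the
point `u*` is feasible with tight budget and minimizes
`u ↦ ∑ t, (β t/2) exp(-u t/2)` over the feasible set, with minimum value
`2Tν = (T/2) exp(-C'/(2T)) (∏ t, β t)^{1/T}`. -/
theorem optimized_proxy_geometric_mean {T : ℕ} (hT : 1 ≤ T)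
    (β : Fin T → ℝ) (hβ : ∀ t, 0 < β t)
    (C' : ℝ) (hC : 0 < C') (G ν : ℝ)
    (hG : G = (∏ t, β t) ^ ((1 : ℝ) / (T : ℝ)))
    (hν : ν = G / 4 * Real.exp (-C' / (2 * (T : ℝ))))
    (hβν : ∀ t, 4 * ν ≤ β t)
    (ustar : Fin T → ℝ)
    (hustar : ∀ t, ustar t = 2 * Real.log (β t / (4 * ν))) :
    (∀ t, 0 ≤ ustar t) ∧
    (∑ t, ustar t = C') ∧
    (∀ u : Fin T → ℝ, (∀ t, 0 ≤ u t) → (∑ t, u t ≤ C') →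
      ∑ t, β t / 2 * Real.exp (-(ustar t) / 2)
        ≤ ∑ t, β t / 2 * Real.exp (-(u t) / 2)) ∧
    (∑ t, β t / 2 * Real.exp (-(ustar t) / 2) = 2 * (T : ℝ) * ν) ∧
    (2 * (T : ℝ) * ν
        = (T : ℝ) / 2 * Real.exp (-C' / (2 * (T : ℝ)))
            * (∏ t, β t) ^ ((1 : ℝ) / (T : ℝ))) := by
  have hT' : (0:ℝ) < T := by exact_mod_cast hT
  have hprod : 0 < ∏ t, β t := Finset.prod_pos (fun t _ => hβ t)
  have hGpos : 0 < G := by rw [hG]; exact Real.rpow_pos_of_pos hprod _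
  have hνpos : 0 < ν := by rw [hν]; positivity
  have hkey : ∀ t, β t = 4 * ν * Real.exp (ustar t / 2) := by
    intro t
    rw [hustar t, show (2 * Real.log (β t / (4*ν)))/2 = Real.log (β t/(4*ν)) by ring,
      Real.exp_log (by have := hβ t; positivity)]
    field_simp
  have hterm : ∀ t, β t / 2 * Real.exp (-(ustar t)/2) = 2 * ν := by
    intro t
    rw [hkey t, show -(ustar t)/2 = -(ustar t/2) by ring, Real.exp_neg]
    have h := (Real.exp_pos (ustar t / 2)).ne'
    field_simp
    ring
  have hnn : ∀ t, 0 ≤ ustar t := by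
    intro t
    rw [hustar t]
    have h1 : (1:ℝ) ≤ β t / (4*ν) := (one_le_div (by positivity)).2 (hβν t)
    have := Real.log_nonneg h1
    linarith
  have hlog4ν : Real.log (4*ν) = Real.log (∏ t, β t) / T - C'/(2*T) := by
    have h4ν : 4*ν = G * Real.exp (-C' / (2*(T:ℝ))) := by rw [hν]; ring
    rw [h4ν, Real.log_mul hGpos.ne' (Real.exp_ne_zero _), Real.log_exp, hG,
      Real.log_rpow hprod]
    field_simp
    ring
  have hsum : ∑ t, ustar t = C' := by
    have : ∀ t, ustar t = 2 * (Real.log (β t) - Real.log (4*ν)) := by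
      intro t
      rw [hustar t, Real.log_div (hβ t).ne' (by positivity)]
    have hlogp : ∑ t, Real.log (β t) = Real.log (∏ t, β t) :=
      (Real.log_prod (fun t _ => (hβ t).ne')).symm
    rw [Finset.sum_congr rfl (fun t _ => this t), ← Finset.mul_sum,
      Finset.sum_sub_distrib, hlogp, Finset.sum_const, Finset.card_univ,
      Fintype.card_fin, nsmul_eq_mul, hlog4ν]
    field_simp
    ring
  refine ⟨hnn, hsum, ?_, ?_, ?_⟩
  · intro u hu hbud
    have hle : ∀ t, 2*ν + ν * (ustar t - u t) ≤ β t / 2 * Real.exp (-(u t)/2) := by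
      intro t
      have : β t / 2 * Real.exp (-(u t)/2) = 2*ν * Real.exp ((ustar t - u t)/2) := by
        rw [hkey t, show (ustar t - u t)/2 = ustar t/2 + (-u t/2) by ring,
          Real.exp_add]
        ring
      rw [this]
      have hexp := Real.add_one_le_exp ((ustar t - u t)/2)
      nlinarith [hνpos]
    calc ∑ t, β t / 2 * Real.exp (-(ustar t)/2) = ∑ t, (2*ν) := by
          exact Finset.sum_congr rfl (fun t _ => hterm t)
      _ = 2 * (T:ℝ) * ν := by simp [Finset.sum_const]; ring
      _ ≤ ∑ t, (2*ν + ν * (ustar t - u t)) := by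
          have h1 : ∑ t, (2*ν + ν * (ustar t - u t))
              = 2*(T:ℝ)*ν + ν*(C' - ∑ t, u t) := by
            rw [Finset.sum_add_distrib, Finset.sum_const, Finset.card_univ,
              Fintype.card_fin, ← Finset.mul_sum, Finset.sum_sub_distrib, hsum]
            push_cast; ring
          rw [h1]
          nlinarith [mul_nonneg hνpos.le (sub_nonneg.2 hbud)]
      _ ≤ ∑ t, β t / 2 * Real.exp (-(u t)/2) := Finset.sum_le_sum (fun t _ => hle t)
  · rw [Finset.sum_congr rfl (fun t _ => hterm t)]
    simp [Finset.sum_const]; ring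
  · rw [hν, hG]; ring
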